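/- Let A be a densely defined, closed linear operator in H such that A + t₀I is of positive-type and A + t₀I ∈ Sect(ω₀) for some t₀ ∈ ℝ and ω₀ ∈ [0,π). Then for every z ∈ ℂ \ closure(−t₀ + S_{ω₀}), the operator A − zI is of positive-type; that is, (−∞,0] ⊂ ρ(A − zI) and sup_{t≥0} ‖(1+t)(A + (t − z)I)^{-1}‖ < ∞. -/

import Mathlib

open MeasureTheory Filter
open scoped InnerProductSpace

noncomputable section
open scoped Classical


variable {H : Type*} [NormedAddCommGroup H] [InnerProductSpace ℂ H] [CompleteSpace H]

/-- `T` is the (bounded, everywhere defined) inverse of `A - z·I`. -/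
def IsResolvent (A : H →ₗ.[ℂ] H) (z : ℂ) (T : H →L[ℂ] H) : Prop :=
  (∀ x : H, ∃ hx : T x ∈ A.domain, A ⟨T x, hx⟩ - z • T x = x) ∧
  ∀ u : A.domain, T (A u - z • (u : H)) = (u : H)

/-- The resolvent set of an unbounded operator. -/
def resolventSetP (A : H →ₗ.[ℂ] H) : Set ℂ := {z | ∃ T, IsResolvent A z T}

/-- The spectrum of an unbounded operator. -/
def specP (A : H →ₗ.[ℂ] H) : Set ℂ := (resolventSetP A)ᶜ

/-- The resolvent `(A - z·I)⁻¹` (junk value `0` off the resolvent set). -/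
def res (A : H →ₗ.[ℂ] H) (z : ℂ) : H →L[ℂ] H :=
  if h : ∃ T, IsResolvent A z T then h.choose else 0

/-- The operator `A + t·I` (same domain). -/
def shiftP (A : H →ₗ.[ℂ] H) (t : ℂ) : H →ₗ.[ℂ] H :=
  ⟨A.domain, A.toFun + t • A.domain.subtype⟩

/-- `A` is of positive type: `(-∞,0] ⊆ ρ(A)` and `sup_{t ≥ 0} ‖(1+t)(A+t)⁻¹‖ < ∞`. -/
def IsPositiveTypeP (A : H →ₗ.[ℂ] H) : Prop :=
  (∀ x : ℝ, x ≤ 0 → (x : ℂ) ∈ resolventSetP A) ∧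
  ∃ M : ℝ, ∀ t : ℝ, 0 ≤ t → (1 + t) * ‖res A (-(t : ℂ))‖ ≤ M

/-- The open sector of half-opening angle `ω` about the positive reals
(`(0,∞)` for `ω = 0`). -/
def sectorS (ω : ℝ) : Set ℂ :=
  if ω = 0 then (fun x : ℝ => (x : ℂ)) '' Set.Ioi 0
  else {z : ℂ | z ≠ 0 ∧ |Complex.arg z| < ω}

/-- `A` is sectorial of angle `ω`. -/
def IsSectorialP (A : H →ₗ.[ℂ] H) (ω : ℝ) : Prop :=
  specP A ⊆ closure (sectorS ω) ∧
  ∀ ω' : ℝ, ω < ω' → ω' < Real.pi →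
    ∃ M : ℝ, ∀ z ∈ (closure (sectorS ω'))ᶜ, ‖z‖ * ‖res A z‖ ≤ M

/-- The shifted sector `-t₀ + S_ω`. -/
def shiftedSector (t0 ω : ℝ) : Set ℂ := (fun w => -(t0 : ℂ) + w) '' sectorS ω

/-- The region `ℂ \ closure (-t₀ + S_ω)`. -/
def offSector (t0 ω : ℝ) : Set ℂ := (closure (shiftedSector t0 ω))ᶜ

/-- The bounded operator `(A - z·I)^{-1/2}`, defined by the Balakrishnan-type formula
`(1/π) ∫₀^∞ t^{-1/2} (A + (t - z)·I)⁻¹ dt`. -/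
def negSqrt (A : H →ₗ.[ℂ] H) (z : ℂ) : H →L[ℂ] H :=
  ((Real.pi : ℂ))⁻¹ • ∫ t in Set.Ioi (0 : ℝ), ((Real.sqrt t : ℂ))⁻¹ • res A (z - t)

/-- Trace-class (nuclear) bounded operators, characterized by
`sup { ∑ |⟨eᵢ, T fᵢ⟩| : (eᵢ), (fᵢ) finite orthonormal families } < ∞`. -/
def IsTraceClass (T : H →L[ℂ] H) : Prop :=
  ∃ C : ℝ, ∀ (n : ℕ) (e f : Fin n → H), Orthonormal ℂ e → Orthonormal ℂ f →
    ∑ i, ‖⟪e i, T (f i)⟫_ℂ‖ ≤ C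

/-- The trace norm `‖T‖₁`. -/
def traceNorm (T : H →L[ℂ] H) : ℝ :=
  sSup {s : ℝ | ∃ (n : ℕ) (e f : Fin n → H), Orthonormal ℂ e ∧ Orthonormal ℂ f ∧
    s = ∑ i, ‖⟪e i, T (f i)⟫_ℂ‖}

/-- The trace of a (trace-class) operator, computed in the Hilbert basis `b`. -/
def traceH (b : HilbertBasis ℕ ℂ H) (T : H →L[ℂ] H) : ℂ :=
  ∑' n, ⟪(b n : H), T (b n)⟫_ℂ

/-- The Fredholm determinant `det (I + T)` (for `T` trace class), computed as the limit of
finite-section determinants along the Hilbert basis `b`. -/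
def detI (b : HilbertBasis ℕ ℂ H) (T : H →L[ℂ] H) : ℂ :=
  limUnder atTop fun F : Finset ℕ =>
    Matrix.det (Matrix.of fun i j : F =>
      (if (i : ℕ) = (j : ℕ) then (1 : ℂ) else 0) + ⟪(b (i : ℕ) : H), T (b (j : ℕ))⟫_ℂ)



section AuxSector
open Complex Filter

lemma core_ineq' (a b t : ℝ) (ht : 0 ≤ t) :
    a * Real.sqrt ((a+t)^2 + b^2) ≤ (a+t) * Real.sqrt (a^2+b^2) := by
  set A := Real.sqrt (a^2+b^2) with hA
  set B := Real.sqrt ((a+t)^2+b^2) with hB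
  have hA0 : 0 ≤ A := Real.sqrt_nonneg _
  have hB0 : 0 ≤ B := Real.sqrt_nonneg _
  have hA2 : A^2 = a^2+b^2 := Real.sq_sqrt (by positivity)
  have hB2 : B^2 = (a+t)^2+b^2 := Real.sq_sqrt (by positivity)
  rcases le_or_gt 0 a with ha | ha
  · have h1 : (a*B)^2 ≤ ((a+t)*A)^2 := by
      have h := mul_nonneg (mul_nonneg (sq_nonneg b) ht) (by linarith : (0:ℝ) ≤ 2*a+t)
      nlinarith
    exact (pow_le_pow_iff_left₀ (mul_nonneg ha hB0) (mul_nonneg (by linarith) hA0) (by norm_num)).1 h1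
  · rcases le_or_gt 0 (a+t) with hat | hat
    · have h1 : a * B ≤ 0 := mul_nonpos_of_nonpos_of_nonneg ha.le hB0
      have h2 : 0 ≤ (a+t)*A := mul_nonneg hat hA0
      linarith
    · have h1 : ((-(a+t))*A)^2 ≤ ((-a)*B)^2 := by
        have h := mul_nonneg (mul_nonneg (sq_nonneg b) ht) (by linarith : (0:ℝ) ≤ -(2*a+t))
        nlinarith
      have := (pow_le_pow_iff_left₀ (mul_nonneg (by linarith : (0:ℝ) ≤ -(a+t)) hA0)
        (mul_nonneg (by linarith : (0:ℝ) ≤ -a) hB0) (by norm_num)).1 h1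
      nlinarith

/-- The closed sector, described by a closed condition. -/
def Kset (ω : ℝ) : Set ℂ := {z : ℂ | ‖z‖ * Real.cos ω ≤ z.re}

lemma Kset_closed (ω : ℝ) : IsClosed (Kset ω) :=
  isClosed_le (by continuity) (by continuity)

lemma abs_eq_sqrt' (z : ℂ) : ‖z‖ = Real.sqrt (z.re^2 + z.im^2) := by
  rw [Complex.norm_def, Complex.normSq_apply]; ring_nf

lemma ofReal_pos_mem_sector {ω x : ℝ} (hω : 0 ≤ ω) (hx : 0 < x) : (x : ℂ) ∈ sectorS ω := by
  unfold sectorS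
  split_ifs with h
  · exact ⟨x, hx, rfl⟩
  · refine ⟨by exact_mod_cast hx.ne', ?_⟩
    rw [Complex.arg_ofReal_of_nonneg hx.le]
    simpa using lt_of_le_of_ne hω (Ne.symm h)

lemma sector_subset_Kset {ω : ℝ} (hω : 0 ≤ ω) (hωπ : ω < Real.pi) : sectorS ω ⊆ Kset ω := by
  intro z hz
  unfold sectorS at hz
  split_ifs at hz with h
  · obtain ⟨x, hx, rfl⟩ := hz
    simp only [Set.mem_Ioi] at hx
    simp [Kset, h, Complex.norm_of_nonneg (le_of_lt hx), abs_of_pos hx]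
  · obtain ⟨hz0, harg⟩ := hz
    have habs : (0:ℝ) < ‖z‖ := by simpa [norm_pos_iff] using hz0
    have hc : Real.cos ω ≤ Real.cos (arg z) := by
      rw [← Real.cos_abs (arg z)]
      exact Real.cos_le_cos_of_nonneg_of_le_pi (abs_nonneg _) hωπ.le harg.le
    have hcos : Real.cos (arg z) = z.re / ‖z‖ := Complex.cos_arg hz0
    show ‖z‖ * Real.cos ω ≤ z.re
    calc ‖z‖ * Real.cos ω ≤ ‖z‖ * Real.cos (arg z) :=
          mul_le_mul_of_nonneg_left hc habs.le
      _ = z.re := by rw [hcos]; field_simp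

lemma Kset_mem_abs_arg {ω : ℝ} (hω : 0 ≤ ω) (hωπ : ω < Real.pi) {z : ℂ} (hz0 : z ≠ 0)
    (hz : z ∈ Kset ω) : |arg z| ≤ ω := by
  by_contra hlt
  push_neg at hlt
  have habs : (0:ℝ) < ‖z‖ := by simpa [norm_pos_iff] using hz0
  have h1 : Real.cos |arg z| < Real.cos ω :=
    Real.strictAntiOn_cos ⟨hω, hωπ.le⟩ ⟨abs_nonneg _, Complex.abs_arg_le_pi z⟩ hlt
  rw [Real.cos_abs, Complex.cos_arg hz0] at h1
  have h2 : z.re < ‖z‖ * Real.cos ω := by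
    have := (div_lt_iff₀ habs).1 h1
    linarith
  exact absurd hz (by simpa [Kset] using h2)

lemma mem_Kset_of_abs_arg {ω : ℝ} (hωπ : ω ≤ Real.pi) {z : ℂ} (harg : |arg z| ≤ ω) :
    z ∈ Kset ω := by
  by_cases hz0 : z = 0
  · subst hz0; simp [Kset]
  · have habs : (0:ℝ) < ‖z‖ := by simpa [norm_pos_iff] using hz0
    have hc : Real.cos ω ≤ Real.cos (arg z) := by
      rw [← Real.cos_abs (arg z)]
      exact Real.cos_le_cos_of_nonneg_of_le_pi (abs_nonneg _) hωπ harg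
    have hcos : Real.cos (arg z) = z.re / ‖z‖ := Complex.cos_arg hz0
    show ‖z‖ * Real.cos ω ≤ z.re
    calc ‖z‖ * Real.cos ω ≤ ‖z‖ * Real.cos (arg z) :=
          mul_le_mul_of_nonneg_left hc habs.le
      _ = z.re := by rw [hcos]; field_simp

lemma not_Kset_abs_arg {ω : ℝ} (hω : 0 ≤ ω) (hωπ : ω < Real.pi) {z : ℂ} (hz0 : z ≠ 0)
    (hlt : ω < |arg z|) : z ∉ Kset ω :=
  fun h => absurd (Kset_mem_abs_arg hω hωπ hz0 h) (not_le.2 hlt)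

lemma Kset_add_real {ω : ℝ} {z : ℂ} (hz : z ∈ Kset ω) {t : ℝ} (ht : 0 ≤ t) :
    z + t ∈ Kset ω := by
  have hc1 : Real.cos ω ≤ 1 := Real.cos_le_one ω
  set a := z.re with ha'
  set b := z.im with hb'
  set c := Real.cos ω with hc'
  have hB : ‖(z + t)‖ = Real.sqrt ((a+t)^2 + b^2) := by
    rw [abs_eq_sqrt']; simp [ha', hb']
  have hre : (z + (t:ℂ)).re = a + t := by simp [ha']
  show ‖(z + t)‖ * c ≤ (z + (t:ℂ)).re
  rw [hre, hB]
  have hz' : Real.sqrt (a^2+b^2) * c ≤ a := by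
    have h := hz; unfold Kset at h; rw [Set.mem_setOf_eq, abs_eq_sqrt'] at h; exact h
  set A := Real.sqrt (a^2+b^2) with hAdef
  set B := Real.sqrt ((a+t)^2+b^2) with hBdef
  have hA0 : 0 ≤ A := Real.sqrt_nonneg _
  have hB0 : 0 ≤ B := Real.sqrt_nonneg _
  have hA2 : A^2 = a^2+b^2 := Real.sq_sqrt (by positivity)
  have hB2 : B^2 = (a+t)^2+b^2 := Real.sq_sqrt (by positivity)
  have hcore : a * B ≤ (a+t) * A := core_ineq' a b t ht
  rcases eq_or_lt_of_le hA0 with hA' | hA'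
  · have ha0 : a = 0 := by nlinarith
    have hb0 : b = 0 := by nlinarith
    rw [ha0]
    nlinarith [sq_nonneg (B - t), mul_nonneg hB0 (sub_nonneg.2 hc1)]
  · have h1 : B * c * A ≤ (a+t) * A := by nlinarith [mul_le_mul_of_nonneg_right hz' hB0]
    exact le_of_mul_le_mul_right h1 hA'

lemma Kset_subset_closure {ω : ℝ} (hω : 0 ≤ ω) (hωπ : ω < Real.pi) :
    Kset ω ⊆ closure (sectorS ω) := by
  intro z hz
  by_cases hz0 : z = 0
  · subst hz0
    have h1 : Tendsto (fun n : ℕ => (1/(n+1) : ℝ)) atTop (nhds 0) :=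
      tendsto_one_div_add_atTop_nhds_zero_nat
    have h2 : Tendsto (fun n : ℕ => ((1/(n+1) : ℝ) : ℂ)) atTop (nhds 0) := by
      have h3 := (Complex.continuous_ofReal.tendsto 0).comp h1
      simpa [Function.comp_def] using h3
    exact mem_closure_of_tendsto h2 (Eventually.of_forall fun n =>
      ofReal_pos_mem_sector hω (one_div_pos.mpr (by positivity)))
  · have harg : |arg z| ≤ ω := Kset_mem_abs_arg hω hωπ hz0 hz
    set θ := arg z with hθ
    by_cases h0 : θ = 0
    · have hre : (‖z‖ : ℂ) = z := by
        have h := Complex.norm_mul_exp_arg_mul_I z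
        rw [← hθ, h0] at h; simpa using h
      have habs : 0 < ‖z‖ := by simpa [norm_pos_iff] using hz0
      exact subset_closure (hre ▸ ofReal_pos_mem_sector hω habs)
    · have hωpos : 0 < ω := lt_of_lt_of_le (abs_pos.2 h0) harg
      have habs : 0 < ‖z‖ := by simpa [norm_pos_iff] using hz0
      have hθπ : |θ| ≤ Real.pi := Complex.abs_arg_le_pi z
      set f : ℕ → ℝ := fun n => θ - θ/(n+1) with hf
      have hfabs : ∀ n : ℕ, |f n| < |θ| := by
        intro n
        have h1 : f n = θ * (1 - 1/(n+1)) := by simp only [hf]; ring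
        have h2 : (0:ℝ) < 1/(n+1) := by positivity
        have h3 : 1/((n:ℝ)+1) ≤ 1 := by
          rw [div_le_one (by positivity)]; linarith [Nat.cast_nonneg (α := ℝ) n]
        rw [h1, abs_mul, _root_.abs_of_nonneg (by linarith : (0:ℝ) ≤ 1 - 1/(n+1))]
        have hθ0 : 0 < |θ| := abs_pos.2 h0
        nlinarith
      have hmem : ∀ n : ℕ, (‖z‖ : ℂ) * Complex.exp ((f n : ℝ) * I) ∈ sectorS ω := by
        intro n
        have hioc : f n ∈ Set.Ioc (-Real.pi) Real.pi := by
          constructor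
          · nlinarith [neg_abs_le (f n), hfabs n]
          · nlinarith [le_abs_self (f n), hfabs n]
        have hexp : Complex.exp ((f n : ℝ) * I) = Complex.cos (f n) + Complex.sin (f n) * I :=
          Complex.exp_mul_I _
        have hargn : arg ((‖z‖ : ℂ) * Complex.exp ((f n : ℝ) * I)) = f n := by
          rw [Complex.arg_real_mul _ habs, hexp, Complex.arg_cos_add_sin_mul_I hioc]
        have hne : (‖z‖ : ℂ) * Complex.exp ((f n : ℝ) * I) ≠ 0 := by
          apply mul_ne_zero
          · exact_mod_cast habs.ne'
          · exact Complex.exp_ne_zero _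
        unfold sectorS
        rw [if_neg hωpos.ne']
        exact ⟨hne, by rw [hargn]; exact lt_of_lt_of_le (hfabs n) harg⟩
      have hft : Tendsto f atTop (nhds θ) := by
        have h1 : Tendsto (fun n : ℕ => θ/(n+1)) atTop (nhds 0) := by
          have h2 := tendsto_one_div_add_atTop_nhds_zero_nat.const_mul θ
          simpa [div_eq_mul_inv, mul_comm] using h2
        simpa using (tendsto_const_nhds (x := θ)).sub h1
      have h2 : Tendsto (fun n : ℕ => ((f n : ℝ) : ℂ) * I) atTop (nhds ((θ:ℂ) * I)) :=
        ((Complex.continuous_ofReal.tendsto θ).comp hft).mul_const I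
      have h3 : Tendsto (fun n : ℕ => (‖z‖ : ℂ) * Complex.exp ((f n : ℝ) * I)) atTop
          (nhds ((‖z‖ : ℂ) * Complex.exp ((θ:ℂ) * I))) :=
        ((Complex.continuous_exp.tendsto _).comp h2).const_mul _
      rw [show (‖z‖ : ℂ) * Complex.exp ((θ:ℂ) * I) = z from Complex.norm_mul_exp_arg_mul_I z] at h3
      exact mem_closure_of_tendsto h3 (Eventually.of_forall hmem)

lemma closure_sector_eq_Kset {ω : ℝ} (hω : 0 ≤ ω) (hωπ : ω < Real.pi) :
    closure (sectorS ω) = Kset ω :=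
  le_antisymm (closure_minimal (sector_subset_Kset hω hωπ) (Kset_closed ω))
    (Kset_subset_closure hω hωπ)

end AuxSector

section AuxOp

variable {H : Type*} [NormedAddCommGroup H] [InnerProductSpace ℂ H] [CompleteSpace H]

lemma isResolvent_unique {A : H →ₗ.[ℂ] H} {z : ℂ} {T T' : H →L[ℂ] H}
    (h : IsResolvent A z T) (h' : IsResolvent A z T') : T = T' := by
  ext x
  obtain ⟨hx, hAx⟩ := h.1 x
  have h2 := h'.2 ⟨T x, hx⟩
  rw [show A ⟨T x, hx⟩ - z • (T x) = x from hAx] at h2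
  exact h2.symm

lemma res_eq {A : H →ₗ.[ℂ] H} {z : ℂ} {T : H →L[ℂ] H} (h : IsResolvent A z T) :
    res A z = T := by
  have hex : ∃ T, IsResolvent A z T := ⟨T, h⟩
  rw [res, dif_pos hex]
  exact isResolvent_unique hex.choose_spec h

lemma shiftP_apply (A : H →ₗ.[ℂ] H) (c : ℂ) (u : A.domain) :
    shiftP A c u = A u + c • (u : H) := rfl

lemma isResolvent_shift {A : H →ₗ.[ℂ] H} {c w : ℂ} {T : H →L[ℂ] H} :
    IsResolvent (shiftP A c) w T ↔ IsResolvent A (w - c) T := by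
  constructor
  · rintro ⟨h1, h2⟩
    constructor
    · intro x
      obtain ⟨hx, hAx⟩ := h1 x
      refine ⟨hx, ?_⟩
      change A ⟨T x, hx⟩ + c • T x - w • T x = x at hAx
      rw [sub_smul]
      rw [show A ⟨T x, hx⟩ - (w • T x - c • T x) = A ⟨T x, hx⟩ + c • T x - w • T x by abel]
      exact hAx
    · intro u
      have h := h2 u
      change T (A u + c • (u:H) - w • (u:H)) = (u:H) at h
      rw [sub_smul]
      rw [show A u - (w • (u:H) - c • (u:H)) = A u + c • (u:H) - w • (u:H) by abel]
      exact h
  · rintro ⟨h1, h2⟩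
    constructor
    · intro x
      obtain ⟨hx, hAx⟩ := h1 x
      refine ⟨hx, ?_⟩
      change A ⟨T x, hx⟩ + c • T x - w • T x = x
      rw [sub_smul] at hAx
      rw [show A ⟨T x, hx⟩ + c • T x - w • T x = A ⟨T x, hx⟩ - (w • T x - c • T x) by abel]
      exact hAx
    · intro u
      have h := h2 u
      rw [sub_smul] at h
      change T (A u + c • (u:H) - w • (u:H)) = (u:H)
      rw [show A u + c • (u:H) - w • (u:H) = A u - (w • (u:H) - c • (u:H)) by abel]
      exact h

lemma res_shift (A : H →ₗ.[ℂ] H) (c w : ℂ) : res (shiftP A c) w = res A (w - c) := by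
  by_cases h : ∃ T, IsResolvent A (w - c) T
  · obtain ⟨T, hT⟩ := h
    rw [res_eq hT, res_eq (isResolvent_shift.mpr hT)]
  · rw [res, res, dif_neg, dif_neg h]
    rintro ⟨T, hT⟩
    exact h ⟨T, isResolvent_shift.mp hT⟩

end AuxOp

/-- if `A + t₀·I` is of positive type and sectorial of angle `ω₀`, then
`A - z·I` is of positive type for every `z ∈ ℂ \ closure(-t₀ + S_{ω₀})`. -/
theorem statement1
    (A : H →ₗ.[ℂ] H) (t0 ω0 : ℝ)
    (hdense : Dense (A.domain : Set H)) (hclosed : IsClosed (A.graph : Set (H × H)))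
    (hω0 : 0 ≤ ω0) (hω0' : ω0 < Real.pi)
    (hpos : IsPositiveTypeP (shiftP A (t0 : ℂ)))
    (hsect : IsSectorialP (shiftP A (t0 : ℂ)) ω0) :
    ∀ z ∈ offSector t0 ω0, IsPositiveTypeP (shiftP A (-z)) := by
  intro z hz
  have hKeq : closure (sectorS ω0) = Kset ω0 := closure_sector_eq_Kset hω0 hω0'
  -- `w = z + t0` is outside the closed sector
  set w : ℂ := z + (t0 : ℂ) with hwdef
  have hw : w ∉ Kset ω0 := by
    intro hmem
    apply hz
    have himg : closure (shiftedSector t0 ω0)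
        = (fun w : ℂ => -(t0 : ℂ) + w) '' closure (sectorS ω0) := by
      unfold shiftedSector
      exact ((Homeomorph.addLeft (-(t0:ℂ))).image_closure (sectorS ω0)).symm
    rw [himg, hKeq]
    exact ⟨w, hmem, by rw [hwdef]; ring⟩
  -- basic consequences
  have hw0 : w ≠ 0 := by
    intro h
    apply hw
    rw [h]
    show ‖(0:ℂ)‖ * Real.cos ω0 ≤ (0:ℂ).re
    simp
  have hargw : ω0 < |Complex.arg w| := by
    by_contra hle
    push_neg at hle
    exact hw (mem_Kset_of_abs_arg hω0'.le hle)
  -- every `w + x` with `x ≤ 0` stays outside the closed sector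
  have hwx : ∀ x : ℝ, x ≤ 0 → w + (x:ℂ) ∉ Kset ω0 := by
    intro x hx hmem
    apply hw
    have h := Kset_add_real hmem (t := -x) (by linarith)
    have : w + (x:ℂ) + ((-x : ℝ):ℂ) = w := by push_cast; ring
    rwa [this] at h
  -- such points are in the resolvent set of `shiftP A t0`
  have hres : ∀ x : ℝ, x ≤ 0 → ∃ T, IsResolvent A ((x:ℂ) + z) T := by
    intro x hx
    have hns : w + (x:ℂ) ∉ specP (shiftP A (t0:ℂ)) := by
      intro hspec
      exact hwx x hx (hKeq ▸ hsect.1 hspec)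
    have hmem : w + (x:ℂ) ∈ resolventSetP (shiftP A (t0:ℂ)) := by
      by_contra hcon
      exact hns hcon
    obtain ⟨T, hT⟩ := hmem
    refine ⟨T, ?_⟩
    have := isResolvent_shift.mp hT
    rwa [show w + (x:ℂ) - (t0:ℂ) = (x:ℂ) + z by rw [hwdef]; ring] at this
  constructor
  · -- resolvent set condition
    intro x hx
    obtain ⟨T, hT⟩ := hres x hx
    refine ⟨T, isResolvent_shift.mpr ?_⟩
    rwa [show (x:ℂ) - (-z) = (x:ℂ) + z by ring]
  · -- uniform bound
    set θ := |Complex.arg w| with hθdef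
    set ω' := (ω0 + θ)/2 with hω'def
    have hθπ : θ ≤ Real.pi := Complex.abs_arg_le_pi w
    have hω'1 : ω0 < ω' := by rw [hω'def]; linarith
    have hω'π : ω' < Real.pi := by rw [hω'def]; linarith
    have hω'0 : 0 ≤ ω' := by rw [hω'def]; positivity
    have hω'θ : ω' < θ := by rw [hω'def]; linarith
    obtain ⟨M, hM⟩ := hsect.2 ω' hω'1 hω'π
    have hKeq' : closure (sectorS ω') = Kset ω' := closure_sector_eq_Kset hω'0 hω'π
    have hwK' : w ∉ Kset ω' := not_Kset_abs_arg hω'0 hω'π hw0 hω'θ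
    -- all the points `w - t`, `t ≥ 0`, lie outside `Kset ω'`
    have hwtK' : ∀ t : ℝ, 0 ≤ t → w - (t:ℂ) ∉ Kset ω' := by
      intro t ht hmem
      apply hwK'
      have h := Kset_add_real hmem ht
      rwa [show w - (t:ℂ) + (t:ℂ) = w by ring] at h
    have hMt : ∀ t : ℝ, 0 ≤ t → ‖w - (t:ℂ)‖ * ‖res (shiftP A (t0:ℂ)) (w - t)‖ ≤ M := by
      intro t ht
      apply hM
      rw [Set.mem_compl_iff, hKeq']
      exact hwtK' t ht
    have hM0 : 0 ≤ M := le_trans (by positivity) (hMt 0 le_rfl)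
    -- the two resolvents coincide
    have hreseq : ∀ t : ℝ, res (shiftP A (-z)) (-(t:ℂ)) = res (shiftP A (t0:ℂ)) (w - t) := by
      intro t
      rw [res_shift, res_shift]
      congr 1
      rw [hwdef]; ring
    -- lower bounds on `|w - t|`
    have hlow2 : ∀ t : ℝ, 0 ≤ t → t - w.re ≤ ‖w - (t:ℂ)‖ := by
      intro t ht
      have h1 : |(w - (t:ℂ)).re| ≤ ‖(w - t)‖ := Complex.abs_re_le_norm _
      have h2 : (w - (t:ℂ)).re = w.re - t := by simp
      calc t - w.re ≤ |w.re - t| := by rw [abs_sub_comm]; exact le_abs_self _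
        _ ≤ ‖(w - t)‖ := by rw [← h2]; exact h1
    have hwim : w.im ≠ 0 ∨ w.re < 0 := by
      by_contra hcon
      push_neg at hcon
      obtain ⟨him, hre⟩ := hcon
      apply hw
      show ‖w‖ * Real.cos ω0 ≤ w.re
      have habsw : ‖w‖ = w.re := by
        rw [abs_eq_sqrt', him]
        simpa using Real.sqrt_sq hre
      rw [habsw]
      nlinarith [Real.cos_le_one ω0, hre]
    set δ : ℝ := if w.im = 0 then -w.re else |w.im| with hδdef
    have hδ0 : 0 < δ := by
      rw [hδdef]
      split_ifs with h
      · rcases hwim with h' | h'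
        · exact absurd h h'
        · linarith
      · exact abs_pos.2 h
    have hlow1 : ∀ t : ℝ, 0 ≤ t → δ ≤ ‖w - (t:ℂ)‖ := by
      intro t ht
      rw [hδdef]
      split_ifs with h
      · have h2 : (w - (t:ℂ)).re = w.re - t := by simp
        calc -w.re ≤ |w.re - t| := by
              rw [abs_sub_comm]
              calc -w.re ≤ t - w.re := by linarith
                _ ≤ |t - w.re| := le_abs_self _
          _ ≤ ‖(w - t)‖ := by
              rw [← h2]; exact Complex.abs_re_le_norm _
      · have h2 : (w - (t:ℂ)).im = w.im := by simp
        calc |w.im| = |(w - (t:ℂ)).im| := by rw [h2]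
          _ ≤ ‖(w - t)‖ := Complex.abs_im_le_norm _
    -- the constant
    set C : ℝ := (2 + 2*|w.re|)/(min δ 1) with hCdef
    have hmin0 : 0 < min δ 1 := lt_min hδ0 one_pos
    have hC0 : 0 < C := by rw [hCdef]; positivity
    have hC2 : 2 ≤ C := by
      rw [hCdef]
      rw [le_div_iff₀ hmin0]
      have h1 : min δ 1 ≤ 1 := min_le_right _ _
      nlinarith [abs_nonneg w.re]
    have hCt : ∀ t : ℝ, 0 ≤ t → 1 + t ≤ C * ‖w - (t:ℂ)‖ := by
      intro t ht
      rcases le_or_gt t (1 + 2*|w.re|) with hcase | hcase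
      · have h1 : C * min δ 1 = 2 + 2*|w.re| := by
          rw [hCdef]; field_simp
        have h2 : min δ 1 ≤ ‖w - (t:ℂ)‖ := le_trans (min_le_left _ _) (hlow1 t ht)
        calc 1 + t ≤ 2 + 2*|w.re| := by linarith
          _ = C * min δ 1 := h1.symm
          _ ≤ C * ‖w - (t:ℂ)‖ := mul_le_mul_of_nonneg_left h2 hC0.le
      · have h1 : 1 + t ≤ 2 * (t - w.re) := by
          have := le_abs_self w.re
          linarith
        have h2 : 0 ≤ t - w.re := by
          have := neg_abs_le w.re
          linarith
        calc 1 + t ≤ 2 * (t - w.re) := h1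
          _ ≤ C * (t - w.re) := mul_le_mul_of_nonneg_right hC2 h2
          _ ≤ C * ‖w - (t:ℂ)‖ := mul_le_mul_of_nonneg_left (hlow2 t ht) hC0.le
    refine ⟨C * M, fun t ht => ?_⟩
    rw [hreseq t]
    calc (1 + t) * ‖res (shiftP A (t0:ℂ)) (w - t)‖
        ≤ (C * ‖w - (t:ℂ)‖) * ‖res (shiftP A (t0:ℂ)) (w - t)‖ :=
          mul_le_mul_of_nonneg_right (hCt t ht) (norm_nonneg _)
      _ = C * (‖w - (t:ℂ)‖ * ‖res (shiftP A (t0:ℂ)) (w - t)‖) := by ring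
      _ ≤ C * M := mul_le_mul_of_nonneg_left (hMt t ht) hC0.le

end
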